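/- Let h₊, h₋ : V → ℝ both be nonzero functions such that {x ∈ V : h₊(x) > 0} = {x ∈ V : h₋(x) < 0}, and let c ∈ ℝ. Then the sinh-Gordon equation −Δu = h₊e^{u} + h₋e^{−u} − c has at least one solution u : V → ℝ. -/

import Mathlib

open Finset Real Filter

/-- The (μ-)Laplacian of `u` at vertex `x` on a finite weighted graph. -/
noncomputable def graphLap {V : Type*} [Fintype V] (ω : V → V → ℝ) (μ : V → ℝ)
    (u : V → ℝ) (x : V) : ℝ :=
  (1 / μ x) * ∑ y, ω x y * (u y - u x)

/-- Connectedness: any two vertices are joined by a path of adjacent vertices. -/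
def graphConnected {V : Type*} [Fintype V] (ω : V → V → ℝ) : Prop :=
  ∀ x y : V, ∃ (n : ℕ) (p : ℕ → V), p 0 = x ∧ p n = y ∧ ∀ i < n, 0 < ω (p i) (p (i + 1))

/-- Maximum of a real function on a finite nonempty vertex set. -/
noncomputable def maxV {V : Type*} [Fintype V] [Nonempty V] (f : V → ℝ) : ℝ :=
  Finset.univ.sup' Finset.univ_nonempty f

/-- Minimum of a real function on a finite nonempty vertex set. -/
noncomputable def minV {V : Type*} [Fintype V] [Nonempty V] (f : V → ℝ) : ℝ :=
  Finset.univ.inf' Finset.univ_nonempty f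

set_option linter.unusedSectionVars false
set_option maxHeartbeats 8000000

namespace SG
variable {V : Type*} [Fintype V] [Nonempty V] [DecidableEq V]

variable {V : Type*} [Fintype V] [Nonempty V] [DecidableEq V]

noncomputable def qf (ω : V → V → ℝ) (u v : V → ℝ) : ℝ :=
  (1/4) * ∑ x, ∑ y, ω x y * (u y - u x) * (v y - v x)

lemma sum2_add (f g : V → V → ℝ) :
    (∑ x, ∑ y, (f x y + g x y)) = (∑ x, ∑ y, f x y) + ∑ x, ∑ y, g x y := by
  rw [← Finset.sum_add_distrib]
  exact Finset.sum_congr rfl fun x _ => Finset.sum_add_distrib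

lemma sum2_congr {f g : V → V → ℝ} (h : ∀ x y, f x y = g x y) :
    (∑ x, ∑ y, f x y) = ∑ x, ∑ y, g x y :=
  Finset.sum_congr rfl fun x _ => Finset.sum_congr rfl fun y _ => h x y

lemma qf_add_left (ω : V → V → ℝ) (u v w : V → ℝ) :
    qf ω (u + v) w = qf ω u w + qf ω v w := by
  simp only [qf, ← mul_add, ← sum2_add]
  congr 1
  exact sum2_congr fun x y => by simp [Pi.add_apply]; ring

lemma qf_symm (ω : V → V → ℝ) (u v : V → ℝ) : qf ω u v = qf ω v u := by
  simp only [qf]; congr 1; exact sum2_congr fun x y => by ring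

lemma qf_add_right (ω : V → V → ℝ) (u v w : V → ℝ) :
    qf ω u (v + w) = qf ω u v + qf ω u w := by
  rw [qf_symm, qf_add_left, qf_symm ω v, qf_symm ω w]

lemma sum2_mul (t : ℝ) (f : V → V → ℝ) :
    t * (∑ x, ∑ y, f x y) = ∑ x, ∑ y, t * f x y := by
  rw [Finset.mul_sum]
  exact Finset.sum_congr rfl fun x _ => Finset.mul_sum _ _ _

lemma qf_smul_left (ω : V → V → ℝ) (t : ℝ) (u w : V → ℝ) :
    qf ω (t • u) w = t * qf ω u w := by
  simp only [qf]
  have h : (∑ x, ∑ y, ω x y * ((t • u) y - (t • u) x) * (w y - w x))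
      = t * ∑ x, ∑ y, ω x y * (u y - u x) * (w y - w x) := by
    rw [sum2_mul]
    exact sum2_congr fun x y => by simp only [Pi.smul_apply, smul_eq_mul]; ring
  rw [h]; ring

lemma qf_neg_left (ω : V → V → ℝ) (u w : V → ℝ) : qf ω (-u) w = -qf ω u w := by
  have := qf_smul_left ω (-1) u w; simpa using this

lemma qf_sub_left (ω : V → V → ℝ) (u v w : V → ℝ) :
    qf ω (u - v) w = qf ω u w - qf ω v w := by
  have h := qf_add_left ω u (-v) w
  rw [qf_neg_left] at h
  simpa [sub_eq_add_neg] using h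

lemma qf_expand (ω : V → V → ℝ) (u w : V → ℝ) :
    qf ω (u + w) (u + w) = qf ω u u + 2 * qf ω u w + qf ω w w := by
  rw [qf_add_left, qf_add_right, qf_add_right, qf_symm ω w u]; ring

lemma qf_smul₂ (ω : V → V → ℝ) (t : ℝ) (w : V → ℝ) :
    qf ω (t • w) (t • w) = t ^ 2 * qf ω w w := by
  rw [qf_smul_left, qf_symm, qf_smul_left, qf_symm ω w]; ring

lemma qf_nonneg {ω : V → V → ℝ} (hnn : ∀ x y, 0 ≤ ω x y) (u : V → ℝ) :
    0 ≤ qf ω u u := by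
  have : (0:ℝ) ≤ ∑ x, ∑ y, ω x y * (u y - u x) * (u y - u x) :=
    Finset.sum_nonneg fun x _ => Finset.sum_nonneg fun y _ => by
      have := hnn x y; nlinarith [sq_nonneg (u y - u x)]
  simp only [qf]; linarith

lemma qf_shift (ω : V → V → ℝ) (w : V → ℝ) (s : ℝ) :
    qf ω (w + fun _ => s) (w + fun _ => s) = qf ω w w := by
  simp only [qf]; congr 1; exact sum2_congr fun x y => by simp [Pi.add_apply]

lemma qf_abs_le {ω : V → V → ℝ} (hnn : ∀ x y, 0 ≤ ω x y) (u v : V → ℝ) :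
    |qf ω u v| ≤ (∑ x, ∑ y, ω x y) * ‖u‖ * ‖v‖ := by
  have hb : ∀ x y : V, |ω x y * (u y - u x) * (v y - v x)| ≤ ω x y * (2 * ‖u‖) * (2 * ‖v‖) := by
    intro x y
    rw [abs_mul, abs_mul, abs_of_nonneg (hnn x y)]
    have hu : |u y - u x| ≤ 2 * ‖u‖ := by
      have h1 : |u y| ≤ ‖u‖ := by simpa [Real.norm_eq_abs] using norm_le_pi_norm u y
      have h2 : |u x| ≤ ‖u‖ := by simpa [Real.norm_eq_abs] using norm_le_pi_norm u x
      calc |u y - u x| ≤ |u y| + |u x| := abs_sub _ _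
        _ ≤ 2 * ‖u‖ := by linarith
    have hv : |v y - v x| ≤ 2 * ‖v‖ := by
      have h1 : |v y| ≤ ‖v‖ := by simpa [Real.norm_eq_abs] using norm_le_pi_norm v y
      have h2 : |v x| ≤ ‖v‖ := by simpa [Real.norm_eq_abs] using norm_le_pi_norm v x
      calc |v y - v x| ≤ |v y| + |v x| := abs_sub _ _
        _ ≤ 2 * ‖v‖ := by linarith
    have h0 : (0:ℝ) ≤ ω x y := hnn x y
    have h2 : (0:ℝ) ≤ 2 * ‖v‖ := by positivity
    have h3 : (0:ℝ) ≤ 2 * ‖u‖ := by positivity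
    exact mul_le_mul (mul_le_mul le_rfl hu (abs_nonneg _) h0) hv (abs_nonneg _) (by positivity)
  have habs : |∑ x, ∑ y, ω x y * (u y - u x) * (v y - v x)| ≤
      ∑ x, ∑ y, ω x y * (2 * ‖u‖) * (2 * ‖v‖) := by
    calc |∑ x, ∑ y, ω x y * (u y - u x) * (v y - v x)|
        ≤ ∑ x, |∑ y, ω x y * (u y - u x) * (v y - v x)| := Finset.abs_sum_le_sum_abs _ _
      _ ≤ ∑ x, ∑ y, |ω x y * (u y - u x) * (v y - v x)| :=
          Finset.sum_le_sum fun x _ => Finset.abs_sum_le_sum_abs _ _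
      _ ≤ ∑ x, ∑ y, ω x y * (2 * ‖u‖) * (2 * ‖v‖) :=
          Finset.sum_le_sum fun x _ => Finset.sum_le_sum fun y _ => hb x y
  have hsum : ∑ x, ∑ y, ω x y * (2 * ‖u‖) * (2 * ‖v‖)
      = (∑ x, ∑ y, ω x y) * (4 * (‖u‖ * ‖v‖)) := by
    rw [Finset.sum_mul]
    refine Finset.sum_congr rfl fun x _ => ?_
    rw [Finset.sum_mul]
    exact Finset.sum_congr rfl fun y _ => by ring
  simp only [qf, abs_mul]
  rw [abs_of_nonneg (by norm_num : (0:ℝ) ≤ (1/4:ℝ))]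
  calc (1/4 : ℝ) * |∑ x, ∑ y, ω x y * (u y - u x) * (v y - v x)|
      ≤ (1/4 : ℝ) * ((∑ x, ∑ y, ω x y) * (4 * (‖u‖ * ‖v‖))) := by
        rw [← hsum]; exact mul_le_mul_of_nonneg_left habs (by norm_num)
    _ = (∑ x, ∑ y, ω x y) * ‖u‖ * ‖v‖ := by ring

lemma qf_eval {ω : V → V → ℝ} (hsymm : ∀ x y, ω x y = ω y x) (u w : V → ℝ) :
    2 * qf ω u w = ∑ z, w z * (-(∑ y, ω z y * (u y - u z))) := by
  have h1 : ∑ x, ∑ y, ω x y * (u y - u x) * w y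
      = -∑ z, ∑ y, ω z y * (u y - u z) * w z := by
    rw [Finset.sum_comm, ← Finset.sum_neg_distrib]
    refine Finset.sum_congr rfl fun z _ => ?_
    rw [← Finset.sum_neg_distrib]
    refine Finset.sum_congr rfl fun x _ => ?_
    rw [hsymm x z]; ring
  have h2 : ∑ x, ∑ y, ω x y * (u y - u x) * (w y - w x)
      = (∑ x, ∑ y, ω x y * (u y - u x) * w y) - ∑ x, ∑ y, ω x y * (u y - u x) * w x := by
    rw [← Finset.sum_sub_distrib]
    refine Finset.sum_congr rfl fun x _ => ?_
    rw [← Finset.sum_sub_distrib]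
    exact Finset.sum_congr rfl fun y _ => by ring
  have h3 : ∑ z, w z * (-(∑ y, ω z y * (u y - u z)))
      = -∑ z, ∑ y, ω z y * (u y - u z) * w z := by
    rw [← Finset.sum_neg_distrib]
    refine Finset.sum_congr rfl fun z _ => ?_
    rw [mul_neg, Finset.mul_sum]
    exact congrArg Neg.neg (Finset.sum_congr rfl fun y _ => by ring)
  simp only [qf]
  rw [h2, h1, h3]
  ring

lemma qf_edge_le {ω : V → V → ℝ} (hnn : ∀ x y, 0 ≤ ω x y) (u : V → ℝ) (a b : V) :
    ω a b * (u b - u a) ^ 2 ≤ 4 * qf ω u u := by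
  have hterm : ∀ x y : V, (0:ℝ) ≤ ω x y * (u y - u x) * (u y - u x) := fun x y => by
    have := hnn x y; nlinarith [sq_nonneg (u y - u x)]
  have h1 : ω a b * (u b - u a) * (u b - u a) ≤ ∑ y, ω a y * (u y - u a) * (u y - u a) :=
    Finset.single_le_sum (f := fun y => ω a y * (u y - u a) * (u y - u a))
      (fun y _ => hterm a y) (Finset.mem_univ b)
  have h2 : (∑ y, ω a y * (u y - u a) * (u y - u a)) ≤
      ∑ x, ∑ y, ω x y * (u y - u x) * (u y - u x) :=
    Finset.single_le_sum (f := fun x => ∑ y, ω x y * (u y - u x) * (u y - u x))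
      (fun x _ => Finset.sum_nonneg fun y _ => hterm x y) (Finset.mem_univ a)
  simp only [qf]
  nlinarith [h1, h2]


/-! ### Potentials and the energy functional -/

noncomputable def Gf (hp hm : V → ℝ) (c : ℝ) (x : V) (t : ℝ) : ℝ :=
  -hp x * Real.exp t + hm x * Real.exp (-t) + c * t

noncomputable def Gd (hp hm : V → ℝ) (c : ℝ) (x : V) (t : ℝ) : ℝ :=
  c - hp x * Real.exp t - hm x * Real.exp (-t)

noncomputable def Phi (ω : V → V → ℝ) (μ hp hm : V → ℝ) (c : ℝ) (u : V → ℝ) : ℝ :=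
  qf ω u u + ∑ x, μ x * Gf hp hm c x (u x)

noncomputable def gradPhi (ω : V → V → ℝ) (μ hp hm : V → ℝ) (c : ℝ) (u : V → ℝ) (z : V) : ℝ :=
  -(∑ y, ω z y * (u y - u z)) + μ z * Gd hp hm c z (u z)

noncomputable def breg (hp hm : V → ℝ) (c : ℝ) (x : V) (r s : ℝ) : ℝ :=
  Gf hp hm c x (r + s) - Gf hp hm c x r - Gd hp hm c x r * s

lemma breg_eq (hp hm : V → ℝ) (c : ℝ) (x : V) (r s : ℝ) :
    breg hp hm c x r s = (-hp x) * (Real.exp r * (Real.exp s - 1 - s))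
      + hm x * (Real.exp (-r) * (Real.exp (-s) - 1 + s)) := by
  simp only [breg, Gf, Gd, neg_add, Real.exp_add]
  ring

lemma breg_zero (hp hm : V → ℝ) (c : ℝ) (x : V) (r : ℝ) : breg hp hm c x r 0 = 0 := by
  simp [breg]

lemma breg_nonneg {hp hm : V → ℝ} {c : ℝ} {x : V} (h1 : hp x ≤ 0) (h2 : 0 ≤ hm x)
    (r s : ℝ) : 0 ≤ breg hp hm c x r s := by
  rw [breg_eq]
  have e1 : 0 ≤ Real.exp s - 1 - s := by nlinarith [Real.add_one_le_exp s]
  have e2 : 0 ≤ Real.exp (-s) - 1 + s := by nlinarith [Real.add_one_le_exp (-s)]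
  have t1 : 0 ≤ (-hp x) * (Real.exp r * (Real.exp s - 1 - s)) :=
    mul_nonneg (by linarith) (mul_nonneg (Real.exp_pos r).le e1)
  have t2 : 0 ≤ hm x * (Real.exp (-r) * (Real.exp (-s) - 1 + s)) :=
    mul_nonneg h2 (mul_nonneg (Real.exp_pos (-r)).le e2)
  linarith

lemma breg_le (hp hm : V → ℝ) (c : ℝ) (x : V) (r : ℝ) {s : ℝ} (hs : |s| ≤ 1) :
    breg hp hm c x r s ≤ (|hp x| * Real.exp r + |hm x| * Real.exp (-r)) * s ^ 2 := by
  rw [breg_eq]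
  have e1 : |Real.exp s - 1 - s| ≤ s ^ 2 := Real.abs_exp_sub_one_sub_id_le hs
  have e2 : |Real.exp (-s) - 1 + s| ≤ s ^ 2 := by
    have h := Real.abs_exp_sub_one_sub_id_le (x := -s) (by rwa [abs_neg])
    rw [sub_neg_eq_add] at h
    simpa using h
  have h1 : (-hp x) * (Real.exp r * (Real.exp s - 1 - s)) ≤ |hp x| * Real.exp r * s ^ 2 := by
    calc (-hp x) * (Real.exp r * (Real.exp s - 1 - s))
        ≤ |(-hp x) * (Real.exp r * (Real.exp s - 1 - s))| := le_abs_self _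
      _ = |hp x| * (Real.exp r * |Real.exp s - 1 - s|) := by
          rw [abs_mul, abs_neg, abs_mul, abs_of_nonneg (Real.exp_pos r).le]
      _ ≤ |hp x| * (Real.exp r * s ^ 2) := by
          gcongr
      _ = |hp x| * Real.exp r * s ^ 2 := by ring
  have h2 : hm x * (Real.exp (-r) * (Real.exp (-s) - 1 + s)) ≤ |hm x| * Real.exp (-r) * s ^ 2 := by
    calc hm x * (Real.exp (-r) * (Real.exp (-s) - 1 + s))
        ≤ |hm x * (Real.exp (-r) * (Real.exp (-s) - 1 + s))| := le_abs_self _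
      _ = |hm x| * (Real.exp (-r) * |Real.exp (-s) - 1 + s|) := by
          rw [abs_mul, abs_mul, abs_of_nonneg (Real.exp_pos (-r)).le]
      _ ≤ |hm x| * (Real.exp (-r) * s ^ 2) := by gcongr
      _ = |hm x| * Real.exp (-r) * s ^ 2 := by ring
  nlinarith [h1, h2]

lemma sgrad_eq {ω : V → V → ℝ} (hsymm : ∀ x y, ω x y = ω y x) (μ hp hm : V → ℝ) (c : ℝ)
    (u w : V → ℝ) :
    ∑ z, w z * gradPhi ω μ hp hm c u z
      = 2 * qf ω u w + ∑ x, μ x * Gd hp hm c x (u x) * w x := by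
  simp only [gradPhi, mul_add]
  rw [Finset.sum_add_distrib, ← qf_eval hsymm]
  congr 1
  exact Finset.sum_congr rfl fun z _ => by ring

lemma Phi_expand {ω : V → V → ℝ} (hsymm : ∀ x y, ω x y = ω y x) (μ hp hm : V → ℝ) (c : ℝ)
    (u w : V → ℝ) :
    Phi ω μ hp hm c (u + w) = Phi ω μ hp hm c u + (∑ z, w z * gradPhi ω μ hp hm c u z)
      + (qf ω w w + ∑ x, μ x * breg hp hm c x (u x) (w x)) := by
  have hG : ∀ x : V, μ x * Gf hp hm c x ((u + w) x)
      = μ x * Gf hp hm c x (u x) + μ x * Gd hp hm c x (u x) * w x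
        + μ x * breg hp hm c x (u x) (w x) := fun x => by
    simp only [breg, Pi.add_apply]; ring
  simp only [Phi, qf_expand ω u w]
  rw [Finset.sum_congr rfl fun x _ => hG x, Finset.sum_add_distrib, Finset.sum_add_distrib,
    sgrad_eq hsymm]
  ring

/-! ### The energy along a coordinate line -/

lemma phi_line_eq {ω : V → V → ℝ} (hsymm : ∀ x y, ω x y = ω y x) (μ hp hm : V → ℝ) (c : ℝ)
    (u : V → ℝ) (z : V) (t : ℝ) :
    Phi ω μ hp hm c (u + t • (Pi.single z 1 : V → ℝ))
      = Phi ω μ hp hm c u + t * gradPhi ω μ hp hm c u z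
        + t ^ 2 * qf ω ((Pi.single z 1 : V → ℝ)) ((Pi.single z 1 : V → ℝ))
        + μ z * breg hp hm c z (u z) t := by
  rw [Phi_expand hsymm]
  have h1 : ∑ z', (t • (Pi.single z 1 : V → ℝ)) z' * gradPhi ω μ hp hm c u z'
      = t * gradPhi ω μ hp hm c u z := by
    rw [Finset.sum_eq_single z]
    · simp
    · intro b _ hb
      simp [Pi.single_eq_of_ne hb]
    · intro h; exact absurd (Finset.mem_univ z) h
  have h2 : ∑ x, μ x * breg hp hm c x (u x) ((t • (Pi.single z 1 : V → ℝ)) x)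
      = μ z * breg hp hm c z (u z) t := by
    rw [Finset.sum_eq_single z]
    · simp
    · intro b _ hb
      simp [Pi.single_eq_of_ne hb, breg_zero]
    · intro h; exact absurd (Finset.mem_univ z) h
  rw [h1, h2, qf_smul₂]
  ring

lemma hasDerivAt_line {ω : V → V → ℝ} (hsymm : ∀ x y, ω x y = ω y x) (μ hp hm : V → ℝ)
    (c : ℝ) (u : V → ℝ) (z : V) :
    HasDerivAt (fun t : ℝ => Phi ω μ hp hm c (u + t • (Pi.single z 1 : V → ℝ)))
      (gradPhi ω μ hp hm c u z) 0 := by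
  have heq : (fun t : ℝ => Phi ω μ hp hm c (u + t • (Pi.single z 1 : V → ℝ)))
      = fun t => Phi ω μ hp hm c u + t * gradPhi ω μ hp hm c u z
        + t ^ 2 * qf ω ((Pi.single z 1 : V → ℝ)) ((Pi.single z 1 : V → ℝ))
        + μ z * (Gf hp hm c z (u z + t) - Gf hp hm c z (u z) - Gd hp hm c z (u z) * t) := by
    funext t
    rw [phi_line_eq hsymm]
    simp [breg]
  rw [heq]
  have hg : HasDerivAt (fun t : ℝ => Gf hp hm c z (u z + t)) (Gd hp hm c z (u z)) 0 := by
    have hid : HasDerivAt (fun t : ℝ => u z + t) 1 0 := (hasDerivAt_id 0).const_add (u z)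
    have h1 : HasDerivAt (fun t : ℝ => Real.exp (u z + t)) (Real.exp (u z)) 0 := by
      have := hid.exp
      simpa using this
    have h2 : HasDerivAt (fun t : ℝ => Real.exp (-(u z + t))) (-Real.exp (-(u z))) 0 := by
      have := hid.neg.exp
      simpa using this
    have h3 : HasDerivAt (fun t : ℝ => -hp z * Real.exp (u z + t)
        + hm z * Real.exp (-(u z + t)) + c * (u z + t))
        (-hp z * Real.exp (u z) + hm z * (-Real.exp (-(u z))) + c * 1) 0 :=
      ((h1.const_mul (-hp z)).add (h2.const_mul (hm z))).add (hid.const_mul c)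
    have : (fun t : ℝ => Gf hp hm c z (u z + t)) = fun t => -hp z * Real.exp (u z + t)
        + hm z * Real.exp (-(u z + t)) + c * (u z + t) := by
      funext t; simp [Gf]
    rw [this]
    convert h3 using 1
    simp [Gd]; ring
  have hconst : HasDerivAt (fun _ : ℝ => Phi ω μ hp hm c u) 0 0 := hasDerivAt_const 0 _
  have hlin : HasDerivAt (fun t : ℝ => t * gradPhi ω μ hp hm c u z)
      (gradPhi ω μ hp hm c u z) 0 := by
    simpa using (hasDerivAt_id (0:ℝ)).mul_const (gradPhi ω μ hp hm c u z)
  have hsq : HasDerivAt (fun t : ℝ => t ^ 2 * qf ω ((Pi.single z 1 : V → ℝ)) ((Pi.single z 1 : V → ℝ))) 0 0 := by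
    have := (hasDerivAt_pow 2 (0:ℝ)).mul_const (qf ω ((Pi.single z 1 : V → ℝ)) ((Pi.single z 1 : V → ℝ)))
    simpa using this
  have hbr : HasDerivAt (fun t : ℝ => μ z * (Gf hp hm c z (u z + t) - Gf hp hm c z (u z)
      - Gd hp hm c z (u z) * t)) 0 0 := by
    have hlin2 : HasDerivAt (fun t : ℝ => Gd hp hm c z (u z) * t) (Gd hp hm c z (u z)) 0 := by
      simpa [mul_comm] using (hasDerivAt_id (0:ℝ)).const_mul (Gd hp hm c z (u z))
    have := ((hg.sub (hasDerivAt_const 0 (Gf hp hm c z (u z)))).sub hlin2).const_mul (μ z)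
    simpa using this
  have := ((hconst.add hlin).add hsq).add hbr
  simpa [Pi.add_def] using this

/-! ### Continuity -/

lemma continuous_Phi (ω : V → V → ℝ) (μ hp hm : V → ℝ) (c : ℝ) :
    Continuous (Phi ω μ hp hm c) := by
  apply Continuous.add
  · apply continuous_const.mul
    apply continuous_finset_sum
    intro x _
    apply continuous_finset_sum
    intro y _
    exact (continuous_const.mul ((continuous_apply y).sub (continuous_apply x))).mul
      ((continuous_apply y).sub (continuous_apply x))
  · apply continuous_finset_sum
    intro x _
    apply continuous_const.mul
    have h1 : Continuous fun u : V → ℝ => Real.exp (u x) :=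
      Real.continuous_exp.comp (continuous_apply x)
    have h2 : Continuous fun u : V → ℝ => Real.exp (-(u x)) :=
      Real.continuous_exp.comp (continuous_apply x).neg
    exact ((continuous_const.mul h1).add (continuous_const.mul h2)).add
      (continuous_const.mul (continuous_apply x))

/-! ### Miscellaneous helpers -/

lemma exists_norm_apply (u : V → ℝ) : ∃ x, ‖u‖ = |u x| := by
  obtain ⟨x, -, hx⟩ := Finset.exists_max_image Finset.univ (fun x => |u x|) Finset.univ_nonempty
  have h1 : ‖u‖ ≤ |u x| := by
    refine (pi_norm_le_iff_of_nonneg (abs_nonneg _)).2 fun y => ?_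
    simpa [Real.norm_eq_abs] using hx y (Finset.mem_univ y)
  have h2 : |u x| ≤ ‖u‖ := by simpa [Real.norm_eq_abs] using norm_le_pi_norm u x
  exact ⟨x, le_antisymm h1 h2⟩

lemma cube_le_exp {x : ℝ} (hx : 0 ≤ x) : x ^ 3 ≤ 27 * Real.exp x := by
  have h1 : x / 3 ≤ Real.exp (x / 3) := by nlinarith [Real.add_one_le_exp (x / 3)]
  have h2 : (x / 3) ^ 3 ≤ Real.exp (x / 3) ^ 3 := by
    exact pow_le_pow_left₀ (by positivity) h1 3
  have h3 : Real.exp (x / 3) ^ 3 = Real.exp x := by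
    rw [← Real.exp_nat_mul]
    congr 1
    push_cast
    ring
  nlinarith [h2, h3]

lemma sq_quarter_le_exp {x : ℝ} (hx : 0 ≤ x) : x ^ 2 ≤ 4 * Real.exp x := by
  have h1 : x / 2 ≤ Real.exp (x / 2) := by nlinarith [Real.add_one_le_exp (x / 2)]
  have h2 : (x / 2) ^ 2 ≤ Real.exp (x / 2) ^ 2 := by
    exact pow_le_pow_left₀ (by positivity) h1 2
  have h3 : Real.exp (x / 2) ^ 2 = Real.exp x := by
    rw [← Real.exp_nat_mul]
    congr 1
    push_cast
    ring
  nlinarith [h2, h3]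

/-! ### Existence of minimizers for coercive functionals -/

lemma exists_minOn {f : (V → ℝ) → ℝ} (hf : Continuous f) {S : Set (V → ℝ)}
    (hS : IsClosed S) {u₀ : V → ℝ} (hu₀ : u₀ ∈ S) {R : ℝ}
    (hcoer : ∀ u ∈ S, R ≤ ‖u‖ → f u₀ ≤ f u) :
    ∃ m, m ∈ S ∧ ∀ u ∈ S, f m ≤ f u := by
  set R' := max R ‖u₀‖ with hR'
  have hK : IsCompact (S ∩ Metric.closedBall 0 R') :=
    (isCompact_closedBall 0 R').inter_left hS
  have hu₀K : u₀ ∈ S ∩ Metric.closedBall 0 R' :=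
    ⟨hu₀, mem_closedBall_zero_iff.2 (le_max_right _ _)⟩
  obtain ⟨m, hmK, hmin⟩ := hK.exists_isMinOn ⟨u₀, hu₀K⟩ hf.continuousOn
  refine ⟨m, hmK.1, fun u hu => ?_⟩
  by_cases hub : ‖u‖ ≤ R'
  · exact hmin ⟨hu, mem_closedBall_zero_iff.2 hub⟩
  · have h1 : f u₀ ≤ f u :=
      hcoer u hu (le_trans (le_max_left _ _) (le_of_not_ge hub))
    exact le_trans (hmin hu₀K) h1

/-! ### Oscillation bound from connectivity -/

lemma osc_bound {ω : V → V → ℝ} (hnn : ∀ x y, 0 ≤ ω x y) (hconn : graphConnected ω) :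
    ∃ K : ℝ, 1 ≤ K ∧ ∀ (u : V → ℝ) (x y : V), |u x - u y| ≤ K * Real.sqrt (qf ω u u) := by
  have hedge : ∀ (u : V → ℝ) (a b : V), 0 < ω a b →
      |u b - u a| ≤ (2 / Real.sqrt (ω a b)) * Real.sqrt (qf ω u u) := by
    intro u a b hab
    have hq := qf_edge_le hnn u a b
    have hqnn : 0 ≤ qf ω u u := qf_nonneg hnn u
    have h2 : (u b - u a) ^ 2 ≤ (2 / Real.sqrt (ω a b)) ^ 2 * qf ω u u := by
      have hsq : Real.sqrt (ω a b) ^ 2 = ω a b := Real.sq_sqrt hab.le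
      have hpos : 0 < Real.sqrt (ω a b) := Real.sqrt_pos.2 hab
      rw [div_pow, hsq, div_mul_eq_mul_div, le_div_iff₀ hab]
      nlinarith [hq]
    have h5 : |u b - u a| ≤ Real.sqrt ((2 / Real.sqrt (ω a b)) ^ 2 * qf ω u u) :=
      Real.abs_le_sqrt h2
    have h6 : Real.sqrt ((2 / Real.sqrt (ω a b)) ^ 2 * qf ω u u)
        = (2 / Real.sqrt (ω a b)) * Real.sqrt (qf ω u u) := by
      rw [Real.sqrt_mul (sq_nonneg _), Real.sqrt_sq (by positivity)]
    rwa [h6] at h5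
  have hpath : ∀ (u : V → ℝ) (n : ℕ) (p : ℕ → V), (∀ i < n, 0 < ω (p i) (p (i+1))) →
      |u (p n) - u (p 0)| ≤ (∑ i ∈ Finset.range n, 2 / Real.sqrt (ω (p i) (p (i+1))))
        * Real.sqrt (qf ω u u) := by
    intro u n
    induction n with
    | zero => intro p _; simp
    | succ k ih =>
      intro p hpe
      have h1 := ih p (fun i hi => hpe i (Nat.lt_succ_of_lt hi))
      have h2 := hedge u (p k) (p (k+1)) (hpe k (Nat.lt_succ_self k))
      have h3 : |u (p (k+1)) - u (p 0)| ≤ |u (p (k+1)) - u (p k)| + |u (p k) - u (p 0)| :=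
        abs_sub_le _ _ _
      rw [Finset.sum_range_succ, add_mul]
      linarith
  have hpair : ∀ x y : V, ∃ Kxy : ℝ, ∀ u : V → ℝ, |u x - u y| ≤ Kxy * Real.sqrt (qf ω u u) := by
    intro x y
    obtain ⟨n, p, h0, hn, he⟩ := hconn x y
    refine ⟨∑ i ∈ Finset.range n, 2 / Real.sqrt (ω (p i) (p (i+1))), fun u => ?_⟩
    have := hpath u n p he
    rw [h0, hn] at this
    rwa [abs_sub_comm] at this
  choose k hk using hpair
  have hKnn : (0:ℝ) ≤ ∑ p : V × V, |k p.1 p.2| :=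
    Finset.sum_nonneg fun p _ => abs_nonneg _
  refine ⟨1 + ∑ p : V × V, |k p.1 p.2|, by linarith, fun u x y => ?_⟩
  have h1 := hk x y u
  have h2 : k x y ≤ 1 + ∑ p : V × V, |k p.1 p.2| := by
    have h3 : |k x y| ≤ ∑ p : V × V, |k p.1 p.2| :=
      Finset.single_le_sum (f := fun p : V × V => |k p.1 p.2|)
        (fun p _ => abs_nonneg _) (Finset.mem_univ (x, y))
    have := le_abs_self (k x y)
    linarith
  exact h1.trans (mul_le_mul_of_nonneg_right h2 (Real.sqrt_nonneg _))

/-! ### Case: `{hp > 0}` empty — global minimization -/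

lemma case_empty {ω : V → V → ℝ} {μ hp hm : V → ℝ} {c : ℝ}
    (hsymm : ∀ x y, ω x y = ω y x) (hnonneg : ∀ x y, 0 ≤ ω x y)
    (hconn : graphConnected ω) (hμ : ∀ x, 0 < μ x)
    (hA : ∀ x, ¬ 0 < hp x) (hmge : ∀ x, 0 ≤ hm x)
    {x₀ x₁ : V} (hx₀ : hp x₀ < 0) (hx₁ : 0 < hm x₁) :
    ∃ u : V → ℝ, ∀ z, gradPhi ω μ hp hm c u z = 0 := by
  obtain ⟨K, hK1, hKosc⟩ := osc_bound hnonneg hconn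
  have hKpos : (0:ℝ) < K := lt_of_lt_of_le one_pos hK1
  set Cc : ℝ := ∑ x : V, μ x * |c| with hCc
  have hCcnn : 0 ≤ Cc := Finset.sum_nonneg fun x _ => mul_nonneg (hμ x).le (abs_nonneg c)
  set a : ℝ := μ x₀ * (-hp x₀) with ha
  set b : ℝ := μ x₁ * hm x₁ with hb
  have hapos : 0 < a := mul_pos (hμ x₀) (by linarith)
  have hbpos : 0 < b := mul_pos (hμ x₁) hx₁
  have hlow : ∀ u : V → ℝ,
      qf ω u u + a * Real.exp (u x₀) + b * Real.exp (-(u x₁)) - Cc * ‖u‖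
        ≤ Phi ω μ hp hm c u := by
    intro u
    have hsplit : ∑ x, μ x * Gf hp hm c x (u x)
        = (∑ x, μ x * ((-hp x) * Real.exp (u x)))
          + (∑ x, μ x * (hm x * Real.exp (-(u x)))) + ∑ x, μ x * (c * u x) := by
      rw [← Finset.sum_add_distrib, ← Finset.sum_add_distrib]
      exact Finset.sum_congr rfl fun x _ => by simp only [Gf]; ring
    have h1 : a * Real.exp (u x₀) ≤ ∑ x, μ x * ((-hp x) * Real.exp (u x)) := by
      have h1' := Finset.single_le_sum (f := fun x => μ x * ((-hp x) * Real.exp (u x)))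
        (fun x _ => mul_nonneg (hμ x).le (mul_nonneg
          (neg_nonneg.2 (not_lt.1 (hA x))) (Real.exp_pos (u x)).le)) (Finset.mem_univ x₀)
      calc a * Real.exp (u x₀) = μ x₀ * ((-hp x₀) * Real.exp (u x₀)) := by rw [ha]; ring
        _ ≤ _ := h1'
    have h2 : b * Real.exp (-(u x₁)) ≤ ∑ x, μ x * (hm x * Real.exp (-(u x))) := by
      have h2' := Finset.single_le_sum (f := fun x => μ x * (hm x * Real.exp (-(u x))))
        (fun x _ => mul_nonneg (hμ x).le (mul_nonneg (hmge x)
          (Real.exp_pos (-(u x))).le)) (Finset.mem_univ x₁)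
      calc b * Real.exp (-(u x₁)) = μ x₁ * (hm x₁ * Real.exp (-(u x₁))) := by rw [hb]; ring
        _ ≤ _ := h2'
    have h3 : -(Cc * ‖u‖) ≤ ∑ x, μ x * (c * u x) := by
      have hterm : ∀ x : V, -(μ x * |c| * ‖u‖) ≤ μ x * (c * u x) := by
        intro x
        have h4 : |u x| ≤ ‖u‖ := by simpa [Real.norm_eq_abs] using norm_le_pi_norm u x
        have h5 : -(|c| * ‖u‖) ≤ c * u x := by
          have h6 := neg_abs_le (c * u x)
          have h7 : |c * u x| ≤ |c| * ‖u‖ := by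
            rw [abs_mul]
            exact mul_le_mul_of_nonneg_left h4 (abs_nonneg c)
          linarith
        calc -(μ x * |c| * ‖u‖) = μ x * (-(|c| * ‖u‖)) := by ring
          _ ≤ μ x * (c * u x) := mul_le_mul_of_nonneg_left h5 (hμ x).le
      calc -(Cc * ‖u‖) = ∑ x : V, -(μ x * |c| * ‖u‖) := by
            rw [Finset.sum_neg_distrib, hCc, Finset.sum_mul]
          _ ≤ ∑ x, μ x * (c * u x) := Finset.sum_le_sum fun x _ => hterm x
    simp only [Phi, hsplit]
    linarith
  set c₁ : ℝ := min (min (1/(9*K^2)) (b/9)) (a/36) with hc₁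
  have hc₁pos : 0 < c₁ :=
    lt_min (lt_min (by positivity) (by positivity)) (by positivity)
  have hcoerc : ∀ u : V → ℝ, c₁ * ‖u‖^2 - Cc * ‖u‖ ≤ Phi ω μ hp hm c u := by
    intro u
    have hTnn : (0:ℝ) ≤ ‖u‖ := norm_nonneg u
    set s := u x₁ with hs
    set w : V → ℝ := u - (fun _ => s) with hwdef
    have hw1 : w x₁ = 0 := by simp [hwdef, hs]
    have hQeq : qf ω u u = qf ω w w := by
      have huw : u = w + (fun _ => s) := by funext x; simp [hwdef]
      conv_lhs => rw [huw]
      exact qf_shift ω w s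
    have hQnn : 0 ≤ qf ω u u := qf_nonneg hnonneg u
    have hwnn : (0:ℝ) ≤ ‖w‖ := norm_nonneg w
    have hr2 : ‖w‖^2 ≤ K^2 * qf ω u u := by
      obtain ⟨xh, hxh⟩ := exists_norm_apply w
      have h1 : |w xh - w x₁| ≤ K * Real.sqrt (qf ω w w) := hKosc w xh x₁
      rw [hw1, sub_zero, ← hQeq, ← hxh] at h1
      have h3 := mul_self_le_mul_self hwnn h1
      have h4 : Real.sqrt (qf ω u u) * Real.sqrt (qf ω u u) = qf ω u u :=
        Real.mul_self_sqrt hQnn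
      nlinarith [h3, h4]
    have hsT : |s| ≤ ‖u‖ := by simpa [hs, Real.norm_eq_abs] using norm_le_pi_norm u x₁
    have hTrs : ‖u‖ ≤ ‖w‖ + |s| := by
      refine (pi_norm_le_iff_of_nonneg (by positivity)).2 fun x => ?_
      have h1 : |w x| ≤ ‖w‖ := by simpa [Real.norm_eq_abs] using norm_le_pi_norm w x
      have h2 : u x = w x + s := by simp [hwdef]
      rw [Real.norm_eq_abs, h2]
      calc |w x + s| ≤ |w x| + |s| := abs_add_le _ _
        _ ≤ ‖w‖ + |s| := by linarith
    have hlow' := hlow u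
    by_cases hcase1 : |s| ≤ 2 * ‖w‖
    · have h1 : c₁ * ‖u‖^2 ≤ qf ω u u := by
        have hc₁le : c₁ ≤ 1/(9*K^2) := le_trans (min_le_left _ _) (min_le_left _ _)
        have h2 : ‖u‖^2 ≤ 9 * K^2 * qf ω u u := by nlinarith
        have h3 : c₁ * ‖u‖^2 ≤ (1/(9*K^2)) * (9*K^2*qf ω u u) := by
          calc c₁ * ‖u‖^2 ≤ (1/(9*K^2)) * ‖u‖^2 := by nlinarith [sq_nonneg ‖u‖]
            _ ≤ (1/(9*K^2)) * (9*K^2*qf ω u u) :=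
                mul_le_mul_of_nonneg_left h2 (by positivity)
        calc c₁ * ‖u‖^2 ≤ (1/(9*K^2)) * (9*K^2*qf ω u u) := h3
          _ = qf ω u u := by field_simp
      nlinarith [mul_pos hapos (Real.exp_pos (u x₀)),
        mul_pos hbpos (Real.exp_pos (-(u x₁)))]
    · push_neg at hcase1
      have hsbig : 2/3 * ‖u‖ ≤ |s| := by linarith
      by_cases hsneg : s ≤ 0
      · have h2 : (-s)^2 ≤ 4 * Real.exp (-s) := sq_quarter_le_exp (by linarith)
        have habs : |s| = -s := abs_of_nonpos hsneg
        have h3 : c₁ * ‖u‖^2 ≤ b * Real.exp (-s) := by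
          have hc₁le : c₁ ≤ b/9 := le_trans (min_le_left _ _) (min_le_right _ _)
          have h9 : ‖u‖ ≤ 3/2 * (-s) := by rw [habs] at hsbig; linarith
          have h10 : ‖u‖^2 ≤ 9/4 * s^2 := by nlinarith [h9, hTnn]
          have h11 : c₁ * ‖u‖^2 ≤ b/9 * ‖u‖^2 :=
            mul_le_mul_of_nonneg_right hc₁le (sq_nonneg ‖u‖)
          have h12 : b/9 * ‖u‖^2 ≤ b/9 * (9/4 * s^2) :=
            mul_le_mul_of_nonneg_left h10 (by positivity)
          nlinarith [h2, hbpos]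
        have hse : -(u x₁) = -s := by rw [hs]
        rw [hse] at hlow'
        nlinarith [mul_pos hapos (Real.exp_pos (u x₀)), hQnn]
      · push_neg at hsneg
        have habs : |s| = s := abs_of_pos hsneg
        have h6 : |w x₀| ≤ ‖w‖ := by simpa [Real.norm_eq_abs] using norm_le_pi_norm w x₀
        have h7 := neg_abs_le (w x₀)
        have hux₀ : ‖u‖/3 ≤ u x₀ := by
          have h8 : u x₀ = w x₀ + s := by simp [hwdef]
          rw [h8]
          linarith
        have h3 : Real.exp (‖u‖/3) ≤ Real.exp (u x₀) := Real.exp_le_exp.2 hux₀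
        have h4 : (‖u‖/3)^2 ≤ 4 * Real.exp (‖u‖/3) := sq_quarter_le_exp (by positivity)
        have h5 : c₁ * ‖u‖^2 ≤ a * Real.exp (u x₀) := by
          have hc₁le : c₁ ≤ a/36 := min_le_right _ _
          nlinarith [Real.exp_pos (‖u‖/3), sq_nonneg ‖u‖]
        nlinarith [mul_pos hbpos (Real.exp_pos (-(u x₁))), hQnn]
  set P0 : ℝ := Phi ω μ hp hm c 0 with hP0
  have hcoer2 : ∀ u : V → ℝ, u ∈ (Set.univ : Set (V → ℝ)) →
      max 1 ((Cc + |P0| + 1)/c₁) ≤ ‖u‖ → P0 ≤ Phi ω μ hp hm c u := by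
    intro u _ hRu
    have h1 : (1:ℝ) ≤ ‖u‖ := le_trans (le_max_left _ _) hRu
    have h2 : (Cc + |P0| + 1)/c₁ ≤ ‖u‖ := le_trans (le_max_right _ _) hRu
    have h3 : Cc + |P0| + 1 ≤ ‖u‖ * c₁ := (div_le_iff₀ hc₁pos).1 h2
    have h4 := hcoerc u
    have h6 := mul_le_mul_of_nonneg_right h3 (norm_nonneg u)
    have h7 : |P0| + 1 ≤ (|P0|+1) * ‖u‖ := by nlinarith [abs_nonneg P0, h1]
    have h8 : ‖u‖ * c₁ * ‖u‖ = c₁ * ‖u‖^2 := by ring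
    have h9 : (Cc + |P0| + 1) * ‖u‖ = Cc*‖u‖ + (|P0|+1)*‖u‖ := by ring
    linarith [le_abs_self P0, h4, h6, h7, h8, h9]
  obtain ⟨m, -, hmin⟩ := exists_minOn (continuous_Phi ω μ hp hm c) isClosed_univ
    (Set.mem_univ 0) hcoer2
  refine ⟨m, fun z => ?_⟩
  have hloc : IsLocalMin (fun t : ℝ => Phi ω μ hp hm c (m + t • (Pi.single z 1 : V → ℝ))) 0 := by
    apply Filter.Eventually.of_forall
    intro t
    simpa using hmin _ (Set.mem_univ _)
  exact hloc.hasDerivAt_eq_zero (hasDerivAt_line hsymm μ hp hm c m z)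

/-! ### Helpers for the nonempty case -/

lemma closed_pred (P : V → Prop) (b : V → ℝ) :
    IsClosed {u : V → ℝ | ∀ x, P x → u x = b x} := by
  have h : {u : V → ℝ | ∀ x, P x → u x = b x}
      = ⋂ x : V, {u : V → ℝ | P x → u x = b x} := by
    ext u; simp [Set.mem_iInter]
  rw [h]
  refine isClosed_iInter fun x => ?_
  by_cases hx : P x
  · have h2 : {u : V → ℝ | P x → u x = b x} = {u : V → ℝ | u x = b x} := by
      ext u; simp [hx]
    rw [h2]
    exact isClosed_eq (continuous_apply x) continuous_const
  · have h2 : {u : V → ℝ | P x → u x = b x} = Set.univ := by ext u; simp [hx]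
    rw [h2]
    exact isClosed_univ

lemma abs_sum_mul_le (g w : V → ℝ) : |∑ z, w z * g z| ≤ (∑ z, |g z|) * ‖w‖ := by
  calc |∑ z, w z * g z| ≤ ∑ z, |w z * g z| := Finset.abs_sum_le_sum_abs _ _
    _ ≤ ∑ z, |g z| * ‖w‖ := by
        refine Finset.sum_le_sum fun z _ => ?_
        rw [abs_mul, mul_comm]
        exact mul_le_mul_of_nonneg_left
          (by simpa [Real.norm_eq_abs] using norm_le_pi_norm w z) (abs_nonneg _)
    _ = (∑ z, |g z|) * ‖w‖ := (Finset.sum_mul _ _ _).symm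

lemma qf_posdef {ω : V → V → ℝ} (hnonneg : ∀ x y, 0 ≤ ω x y) {K : ℝ}
    (hKosc : ∀ (u : V → ℝ) (x y : V), |u x - u y| ≤ K * Real.sqrt (qf ω u u))
    {hp : V → ℝ} {a₀ : V} (ha₀ : 0 < hp a₀) :
    ∀ w : V → ℝ, (∀ x, 0 < hp x → w x = 0) → ‖w‖^2 ≤ K^2 * qf ω w w := by
  intro w hw
  obtain ⟨xh, hxh⟩ := exists_norm_apply w
  have h0 : w a₀ = 0 := hw a₀ ha₀
  have h1 : |w xh - w a₀| ≤ K * Real.sqrt (qf ω w w) := hKosc w xh a₀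
  rw [h0, sub_zero, ← hxh] at h1
  have h3 := mul_self_le_mul_self (norm_nonneg w) h1
  have h4 := Real.mul_self_sqrt (qf_nonneg hnonneg w)
  nlinarith [h3, h4]

lemma breg_sum_nonneg {μ hp hm : V → ℝ} {c : ℝ} (hμ : ∀ x, 0 < μ x)
    (hmB : ∀ x, ¬ 0 < hp x → 0 ≤ hm x) (u w : V → ℝ)
    (hw : ∀ x, 0 < hp x → w x = 0) :
    0 ≤ ∑ x, μ x * breg hp hm c x (u x) (w x) := by
  refine Finset.sum_nonneg fun x _ => mul_nonneg (hμ x).le ?_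
  by_cases hx : 0 < hp x
  · rw [hw x hx, breg_zero]
  · exact breg_nonneg (not_lt.1 hx) (hmB x hx) _ _

lemma breg_cancel (hp hm : V → ℝ) (c : ℝ) (x : V) (r s : ℝ) :
    Gd hp hm c x r * s - Gd hp hm c x (r + s) * s + breg hp hm c x r s
      + breg hp hm c x (r + s) (-s) = 0 := by
  simp only [breg]
  have h : r + s + -s = r := by ring
  rw [h]
  ring

/-- Division-free quantitative lower bound on slices. -/
lemma inner_bound {ω : V → V → ℝ} {μ hp hm : V → ℝ} {c : ℝ}
    (hsymm : ∀ x y, ω x y = ω y x) (hnonneg : ∀ x y, 0 ≤ ω x y)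
    (hμ : ∀ x, 0 < μ x) (hmB : ∀ x, ¬ 0 < hp x → 0 ≤ hm x)
    {K : ℝ} (hKnn : 0 ≤ K)
    (hKosc : ∀ (u : V → ℝ) (x y : V), |u x - u y| ≤ K * Real.sqrt (qf ω u u))
    {a₀ : V} (ha₀ : 0 < hp a₀) (v u : V → ℝ)
    (hu : ∀ x, 0 < hp x → u x = v x) :
    ‖u - (fun x => if 0 < hp x then v x else 0)‖^2
      ≤ K^2 * (Phi ω μ hp hm c u
          - Phi ω μ hp hm c (fun x => if 0 < hp x then v x else 0)
        + (∑ z, |gradPhi ω μ hp hm c (fun x => if 0 < hp x then v x else 0) z|)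
          * ‖u - (fun x => if 0 < hp x then v x else 0)‖) := by
  set p : V → ℝ := fun x => if 0 < hp x then v x else 0 with hpdef
  set w : V → ℝ := u - p with hwdef
  have hwA : ∀ x, 0 < hp x → w x = 0 := by
    intro x hx
    have h1 : p x = v x := by rw [hpdef]; simp [hx]
    simp [hwdef, h1, hu x hx]
  have hup : u = p + w := by rw [hwdef]; abel
  have hexp := Phi_expand hsymm μ hp hm c p w
  rw [← hup] at hexp
  have h1 : |∑ z, w z * gradPhi ω μ hp hm c p z|
      ≤ (∑ z, |gradPhi ω μ hp hm c p z|) * ‖w‖ := abs_sum_mul_le _ _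
  have h2 : ‖w‖^2 ≤ K^2 * qf ω w w := qf_posdef hnonneg hKosc ha₀ w hwA
  have h4 := breg_sum_nonneg (c := c) hμ hmB p w hwA
  have h5 := neg_abs_le (∑ z, w z * gradPhi ω μ hp hm c p z)
  have h6 : qf ω w w ≤ Phi ω μ hp hm c u - Phi ω μ hp hm c p
      + (∑ z, |gradPhi ω μ hp hm c p z|) * ‖w‖ := by linarith
  calc ‖w‖^2 ≤ K^2 * qf ω w w := h2
    _ ≤ K^2 * (Phi ω μ hp hm c u - Phi ω μ hp hm c p
        + (∑ z, |gradPhi ω μ hp hm c p z|) * ‖w‖) := by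
        apply mul_le_mul_of_nonneg_left h6 (by positivity)

/-! ### Case: `{hp > 0}` nonempty — constrained minimax -/

lemma case_nonempty {ω : V → V → ℝ} {μ hp hm : V → ℝ} {c : ℝ}
    (hsymm : ∀ x y, ω x y = ω y x) (hnonneg : ∀ x y, 0 ≤ ω x y)
    (hconn : graphConnected ω) (hμ : ∀ x, 0 < μ x)
    (hmB : ∀ x, ¬ 0 < hp x → 0 ≤ hm x) (hmA : ∀ x, 0 < hp x → hm x < 0)
    {a₀ : V} (ha₀ : 0 < hp a₀) :
    ∃ u : V → ℝ, ∀ z, gradPhi ω μ hp hm c u z = 0 := by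
  classical
  obtain ⟨K, hK1, hKosc⟩ := osc_bound hnonneg hconn
  have hKpos : (0:ℝ) < K := lt_of_lt_of_le one_pos hK1
  have hK2pos : (0:ℝ) < K^2 := by positivity
  set Cq : ℝ := ∑ x : V, ∑ y : V, ω x y with hCqdef
  have hCqnn : 0 ≤ Cq := Finset.sum_nonneg fun x _ =>
    Finset.sum_nonneg fun y _ => hnonneg x y
  set pA : (V → ℝ) → (V → ℝ) := fun v x => if 0 < hp x then v x else 0 with hpAdef
  set Sg : (V → ℝ) → ℝ := fun v => ∑ z, |gradPhi ω μ hp hm c (pA v) z| with hSgdef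
  have hSgnn : ∀ v, 0 ≤ Sg v := fun v => Finset.sum_nonneg fun z _ => abs_nonneg _
  have hpAmem : ∀ v : V → ℝ, ∀ x, 0 < hp x → pA v x = v x := by
    intro v x hx; simp [hpAdef, hx]
  have hinner : ∀ v u : V → ℝ, (∀ x, 0 < hp x → u x = v x) →
      ‖u - pA v‖^2 ≤ K^2 * (Phi ω μ hp hm c u - Phi ω μ hp hm c (pA v)
        + Sg v * ‖u - pA v‖) :=
    fun v u hu => inner_bound hsymm hnonneg hμ hmB hKpos.le hKosc ha₀ v u hu
  -- existence of inner minimizers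
  have hβex : ∀ v : V → ℝ, ∃ m, m ∈ {u : V → ℝ | ∀ x, 0 < hp x → u x = v x}
      ∧ ∀ u ∈ {u : V → ℝ | ∀ x, 0 < hp x → u x = v x},
        Phi ω μ hp hm c m ≤ Phi ω μ hp hm c u := by
    intro v
    have hpAin : pA v ∈ {u : V → ℝ | ∀ x, 0 < hp x → u x = v x} := fun x hx => hpAmem v x hx
    refine exists_minOn (continuous_Phi ω μ hp hm c) ?_ hpAin
      (R := ‖pA v‖ + K^2 * (Sg v + 1)) ?_
    · have := closed_pred (fun x => 0 < hp x) v
      convert this using 2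
    · intro u hu hRu
      have h1 := hinner v u hu
      have h2 : ‖u‖ - ‖pA v‖ ≤ ‖u - pA v‖ := by
        have := norm_sub_norm_le u (pA v); linarith
      have h3 : K^2 * (Sg v + 1) ≤ ‖u - pA v‖ := by linarith
      have h5 : 0 ≤ (‖u - pA v‖ - K^2 * Sg v) * ‖u - pA v‖ :=
        mul_nonneg (by linarith) (norm_nonneg _)
      nlinarith [h1, h5, hK2pos]
  choose β hβmem hβmin using hβex
  have hβA : ∀ v : V → ℝ, ∀ x, 0 < hp x → β v x = v x := fun v x hx => (hβmem v) x hx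
  -- first-order conditions in the directions where hp ≤ 0
  have hgradB : ∀ v z, ¬ 0 < hp z → gradPhi ω μ hp hm c (β v) z = 0 := by
    intro v z hz
    have hmem : ∀ t : ℝ, ∀ x, 0 < hp x →
        (β v + t • (Pi.single z 1 : V → ℝ)) x = v x := by
      intro t x hx
      have hxz : x ≠ z := fun h => hz (h ▸ hx)
      simp [Pi.single_eq_of_ne hxz, hβA v x hx]
    have hloc : IsLocalMin
        (fun t : ℝ => Phi ω μ hp hm c (β v + t • (Pi.single z 1 : V → ℝ))) 0 := by
      apply Filter.Eventually.of_forall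
      intro t
      have := hβmin v _ (hmem t)
      simpa using this
    exact hloc.hasDerivAt_eq_zero (hasDerivAt_line hsymm μ hp hm c (β v) z)
  -- strong convexity inequality at the inner minimizer
  have hstrong : ∀ v (w : V → ℝ), (∀ x, 0 < hp x → w x = 0) →
      Phi ω μ hp hm c (β v) + qf ω w w ≤ Phi ω μ hp hm c (β v + w) := by
    intro v w hw
    have hexp := Phi_expand hsymm μ hp hm c (β v) w
    have h0 : ∑ z, w z * gradPhi ω μ hp hm c (β v) z = 0 := by
      refine Finset.sum_eq_zero fun z _ => ?_
      by_cases hz : 0 < hp z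
      · rw [hw z hz, zero_mul]
      · rw [hgradB v z hz, mul_zero]
    have h4 := breg_sum_nonneg (c := c) hμ hmB (β v) w hw
    linarith [hexp, h0, h4]
  -- Lipschitz continuity of the inner minimizer
  set L : ℝ := Cq * K^2 + 1 with hLdef
  have hLpos : 0 < L := by nlinarith [hCqnn, hK2pos]
  have hlip : ∀ v v' : V → ℝ, ‖β v' - β v‖ ≤ L * ‖v' - v‖ := by
    intro v v'
    set δ : V → ℝ := fun x => if 0 < hp x then v x - v' x else 0 with hδdef
    have hδnorm : ‖δ‖ ≤ ‖v - v'‖ := by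
      refine (pi_norm_le_iff_of_nonneg (norm_nonneg _)).2 fun x => ?_
      rw [Real.norm_eq_abs]
      by_cases hx : 0 < hp x
      · have : δ x = v x - v' x := by rw [hδdef]; simp [hx]
        rw [this]
        simpa [Real.norm_eq_abs] using norm_le_pi_norm (v - v') x
      · have : δ x = 0 := by rw [hδdef]; simp [hx]
        rw [this]
        simp [norm_nonneg]
    set w : V → ℝ := β v' + δ - β v with hwdef
    have hwA : ∀ x, 0 < hp x → w x = 0 := by
      intro x hx
      have h1 : β v x = v x := hβA v x hx
      have h2 : β v' x = v' x := hβA v' x hx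
      have h3 : δ x = v x - v' x := by rw [hδdef]; simp [hx]
      have : w x = β v' x + δ x - β v x := by rw [hwdef]; simp
      rw [this, h1, h2, h3]; ring
    have h1 := hstrong v w hwA
    have h2 := hstrong v' (-w) (fun x hx => by rw [Pi.neg_apply, hwA x hx, neg_zero])
    have hqnegw : qf ω (-w) (-w) = qf ω w w := by
      have := qf_smul₂ ω (-1) w; simpa using this
    rw [hqnegw] at h2
    have e1 : β v + w = β v' + δ := by rw [hwdef]; abel
    have e2 : β v' + -w = β v + -δ := by rw [hwdef]; abel
    rw [e1] at h1
    rw [e2] at h2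
    have hex1 := Phi_expand hsymm μ hp hm c (β v') δ
    have hex2 := Phi_expand hsymm μ hp hm c (β v) (-δ)
    have hqnegδ : qf ω (-δ) (-δ) = qf ω δ δ := by
      have := qf_smul₂ ω (-1) δ; simpa using this
    rw [hqnegδ] at hex2
    have hs1 := sgrad_eq hsymm μ hp hm c (β v') δ
    have hs2 := sgrad_eq hsymm μ hp hm c (β v) (-δ)
    have hq2 : qf ω (β v) (-δ) = - qf ω (β v) δ := by
      rw [qf_symm, qf_neg_left, qf_symm]
    have hGd2 : ∑ x, μ x * Gd hp hm c x (β v x) * (-δ) x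
        = -(∑ x, μ x * Gd hp hm c x (β v x) * δ x) := by
      rw [← Finset.sum_neg_distrib]
      exact Finset.sum_congr rfl fun x _ => by rw [Pi.neg_apply]; ring
    have hcancel : (∑ x, μ x * Gd hp hm c x (β v' x) * δ x)
        - (∑ x, μ x * Gd hp hm c x (β v x) * δ x)
        + (∑ x, μ x * breg hp hm c x (β v' x) (δ x))
        + (∑ x, μ x * breg hp hm c x (β v x) ((-δ) x)) = 0 := by
      rw [← Finset.sum_sub_distrib, ← Finset.sum_add_distrib, ← Finset.sum_add_distrib]
      refine Finset.sum_eq_zero fun x _ => ?_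
      by_cases hx : 0 < hp x
      · have h1' : β v x = v x := hβA v x hx
        have h2' : β v' x = v' x := hβA v' x hx
        have h3' : δ x = v x - v' x := by rw [hδdef]; simp [hx]
        have h4' : β v x = β v' x + δ x := by rw [h1', h2', h3']; ring
        rw [Pi.neg_apply, h4']
        have h5' := breg_cancel hp hm c x (β v' x) (δ x)
        linear_combination μ x * h5'
      · have h3' : δ x = 0 := by rw [hδdef]; simp [hx]
        rw [Pi.neg_apply, h3']
        simp [breg_zero]
    have hsub : qf ω (β v') δ - qf ω (β v) δ = qf ω w δ - qf ω δ δ := by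
      have h9 : β v' - β v = w - δ := by rw [hwdef]; abel
      rw [← qf_sub_left, h9, qf_sub_left]
    have hkey : qf ω w w ≤ qf ω w δ := by
      linarith [h1, h2, hex1, hex2, hs1, hs2, hq2, hGd2, hcancel, hsub]
    have hqfw : ‖w‖^2 ≤ K^2 * qf ω w w := qf_posdef hnonneg hKosc ha₀ w hwA
    have habs : qf ω w δ ≤ Cq * ‖w‖ * ‖δ‖ :=
      le_trans (le_abs_self _) (qf_abs_le hnonneg w δ)
    have hwb : ‖w‖ ≤ K^2 * Cq * ‖δ‖ := by
      rcases eq_or_lt_of_le (norm_nonneg w) with h0 | h0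
      · rw [← h0]; positivity
      · have h5 : ‖w‖ * ‖w‖ ≤ (K^2 * Cq * ‖δ‖) * ‖w‖ := by nlinarith
        exact le_of_mul_le_mul_right h5 h0
    have e9 : β v' - β v = w - δ := by rw [hwdef]; abel
    calc ‖β v' - β v‖ = ‖w - δ‖ := by rw [e9]
      _ ≤ ‖w‖ + ‖δ‖ := norm_sub_le _ _
      _ ≤ K^2*Cq*‖δ‖ + ‖δ‖ := by linarith
      _ = L * ‖δ‖ := by rw [hLdef]; ring
      _ ≤ L * ‖v' - v‖ := by
          have : ‖δ‖ ≤ ‖v' - v‖ := by rw [← norm_sub_rev v]; exact hδnorm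
          exact mul_le_mul_of_nonneg_left this hLpos.le
  -- continuity of the reduced (negated) functional
  have hβcont : Continuous β := by
    have hlw : LipschitzWith (Real.toNNReal L) β :=
      LipschitzWith.of_dist_le_mul fun v v' => by
        rw [dist_eq_norm, dist_eq_norm, Real.coe_toNNReal L hLpos.le]
        exact hlip v' v
    exact hlw.continuous
  have hhcont : Continuous (fun v => -(Phi ω μ hp hm c (β v))) :=
    ((continuous_Phi ω μ hp hm c).comp hβcont).neg
  -- lower bound for the inner minimum over the zero slice
  set D : ℝ := Phi ω μ hp hm c (pA 0) - K^2*K^2*(Sg 0)^2/4 with hDdef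
  have hD : D ≤ Phi ω μ hp hm c (β 0) := by
    rw [hDdef]
    have h1 := hinner 0 (β 0) (fun x hx => hβA 0 x hx)
    have hq := sq_nonneg (‖β 0 - pA 0‖ - K^2 * Sg 0 / 2)
    have h2 : -(K^2*K^2*(Sg 0)^2/4)
        ≤ K^2 * (Phi ω μ hp hm c (β 0) - Phi ω μ hp hm c (pA 0)) := by
      nlinarith [hq, h1]
    have hr : -(K^2*K^2*(Sg 0)^2/4) = K^2 * (-(K^2*(Sg 0)^2/4)) := by ring
    have h4 : K^2 * (-(K^2*(Sg 0)^2/4))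
        ≤ K^2 * (Phi ω μ hp hm c (β 0) - Phi ω μ hp hm c (pA 0)) := by
      rw [← hr]; exact h2
    have h5 := (mul_le_mul_iff_right₀ hK2pos).1 h4
    have hK21 : (1:ℝ) ≤ K^2 := by nlinarith [hK1]
    have h6 : K^2*(Sg 0)^2 ≤ K^2*K^2*(Sg 0)^2 := by
      nlinarith [mul_nonneg (mul_nonneg hK2pos.le (sq_nonneg (Sg 0)))
        (by linarith : (0:ℝ) ≤ K^2 - 1)]
    linarith [h5, h6]
  -- the positive constant κ on the set where hp > 0
  set AF : Finset V := Finset.univ.filter (fun x => 0 < hp x) with hAFdef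
  have hAFne : AF.Nonempty := ⟨a₀, by rw [hAFdef]; simp [ha₀]⟩
  set κ : ℝ := AF.inf' hAFne (fun x => μ x * min (hp x) (-hm x)) with hκdef
  have hκpos : 0 < κ := by
    rw [hκdef, Finset.lt_inf'_iff]
    intro x hx
    have hx' : 0 < hp x := by
      rw [hAFdef] at hx
      exact (Finset.mem_filter.1 hx).2
    have hmx := hmA x hx'
    exact mul_pos (hμ x) (lt_min hx' (by linarith))
  have hκle : ∀ x, 0 < hp x → κ ≤ μ x * min (hp x) (-hm x) := by
    intro x hx
    rw [hκdef]
    exact Finset.inf'_le _ (by rw [hAFdef]; simp [hx])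
  set C9 : ℝ := ∑ x : V, μ x * (|hp x| + |hm x| + |c|) with hC9def
  have hC9nn : 0 ≤ C9 := Finset.sum_nonneg fun x _ =>
    mul_nonneg (hμ x).le (by positivity)
  -- upper bound for Phi on functions supported in {hp > 0}
  have houter : ∀ v : V → ℝ, (∀ x, ¬ 0 < hp x → v x = 0) → v ≠ 0 →
      Phi ω μ hp hm c v ≤ Cq * ‖v‖^2 + C9 * (1 + ‖v‖) - κ * Real.exp ‖v‖ := by
    intro v hv hvne
    obtain ⟨xh, hxh⟩ := exists_norm_apply v
    have hvpos : 0 < ‖v‖ := norm_pos_iff.2 hvne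
    have hxhA : 0 < hp xh := by
      by_contra hcon
      rw [hv xh hcon, abs_zero] at hxh
      linarith
    have hterm : ∀ x, μ x * Gf hp hm c x (v x)
        ≤ μ x * (|hp x| + |hm x| + |c|) * (1 + ‖v‖) := by
      intro x
      have hvx : |v x| ≤ ‖v‖ := by simpa [Real.norm_eq_abs] using norm_le_pi_norm v x
      have e3 : c * v x ≤ |c| * ‖v‖ := by
        calc c * v x ≤ |c * v x| := le_abs_self _
          _ = |c| * |v x| := abs_mul c (v x)
          _ ≤ |c| * ‖v‖ := mul_le_mul_of_nonneg_left hvx (abs_nonneg c)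
      by_cases hx : 0 < hp x
      · have hmx := hmA x hx
        have e1 : -hp x * Real.exp (v x) ≤ 0 := by nlinarith [Real.exp_pos (v x)]
        have e2 : hm x * Real.exp (-(v x)) ≤ 0 := by nlinarith [Real.exp_pos (-(v x))]
        have e4 : Gf hp hm c x (v x) ≤ (|hp x| + |hm x| + |c|) * (1 + ‖v‖) := by
          have e5 : Gf hp hm c x (v x) ≤ |c| * ‖v‖ := by
            simp only [Gf]; linarith
          nlinarith [abs_nonneg (hp x), abs_nonneg (hm x), abs_nonneg c, hvpos]
        calc μ x * Gf hp hm c x (v x)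
            ≤ μ x * ((|hp x| + |hm x| + |c|) * (1 + ‖v‖)) :=
              mul_le_mul_of_nonneg_left e4 (hμ x).le
          _ = μ x * (|hp x| + |hm x| + |c|) * (1 + ‖v‖) := by ring
      · have h0 : v x = 0 := hv x hx
        rw [h0]
        have e4 : Gf hp hm c x 0 ≤ (|hp x| + |hm x| + |c|) * (1 + ‖v‖) := by
          have e5 : Gf hp hm c x 0 = -hp x + hm x := by simp [Gf]
          rw [e5]
          have e6 := neg_abs_le (hp x)
          have e7 := le_abs_self (hm x)
          nlinarith [abs_nonneg (hp x), abs_nonneg (hm x), abs_nonneg c, hvpos]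
        calc μ x * Gf hp hm c x 0 ≤ μ x * ((|hp x| + |hm x| + |c|) * (1 + ‖v‖)) :=
            mul_le_mul_of_nonneg_left e4 (hμ x).le
          _ = _ := by ring
    have hxterm : μ xh * Gf hp hm c xh (v xh)
        ≤ μ xh * (|hp xh| + |hm xh| + |c|) * (1 + ‖v‖) - κ * Real.exp ‖v‖ := by
      have hmx := hmA xh hxhA
      have hκ2 := hκle xh hxhA
      have hmin1 : κ ≤ μ xh * hp xh :=
        le_trans hκ2 (mul_le_mul_of_nonneg_left (min_le_left _ _) (hμ xh).le)
      have hmin2 : κ ≤ μ xh * (-hm xh) :=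
        le_trans hκ2 (mul_le_mul_of_nonneg_left (min_le_right _ _) (hμ xh).le)
      have e3 : μ xh * (c * v xh) ≤ μ xh * (|c| * ‖v‖) := by
        apply mul_le_mul_of_nonneg_left _ (hμ xh).le
        calc c * v xh ≤ |c * v xh| := le_abs_self _
          _ = |c| * |v xh| := abs_mul c (v xh)
          _ = |c| * ‖v‖ := by rw [← hxh]
      have esplit : μ xh * Gf hp hm c xh (v xh) = μ xh * (-hp xh * Real.exp (v xh))
          + μ xh * (hm xh * Real.exp (-(v xh))) + μ xh * (c * v xh) := by
        simp only [Gf]; ring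
      have e4 : μ xh * (|c| * ‖v‖) ≤ μ xh * (|hp xh| + |hm xh| + |c|) * (1 + ‖v‖) := by
        have h1 : |c| * ‖v‖ ≤ (|hp xh| + |hm xh| + |c|) * (1 + ‖v‖) := by
          nlinarith [abs_nonneg (hp xh), abs_nonneg (hm xh), abs_nonneg c, hvpos.le]
        calc μ xh * (|c| * ‖v‖) ≤ μ xh * ((|hp xh| + |hm xh| + |c|) * (1 + ‖v‖)) :=
            mul_le_mul_of_nonneg_left h1 (hμ xh).le
          _ = _ := by ring
      rcases abs_cases (v xh) with ⟨he, hsgn⟩ | ⟨he, hsgn⟩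
      · have hveq : v xh = ‖v‖ := by rw [hxh, he]
        have p1 : μ xh * (-hp xh * Real.exp (v xh)) ≤ -(κ * Real.exp ‖v‖) := by
          rw [hveq]
          nlinarith [Real.exp_pos ‖v‖, hmin1]
        have p2 : μ xh * (hm xh * Real.exp (-(v xh))) ≤ 0 := by
          nlinarith [Real.exp_pos (-(v xh)), (hμ xh).le, hmx]
        linarith [esplit, p1, p2, e3, e4]
      · have hveq : v xh = -‖v‖ := by
          have h9 : ‖v‖ = -(v xh) := hxh.trans he
          linarith
        have p1 : μ xh * (-hp xh * Real.exp (v xh)) ≤ 0 := by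
          nlinarith [Real.exp_pos (v xh), (hμ xh).le, hxhA]
        have p2 : μ xh * (hm xh * Real.exp (-(v xh))) ≤ -(κ * Real.exp ‖v‖) := by
          have hne : -(v xh) = ‖v‖ := by rw [hveq]; ring
          rw [hne]
          nlinarith [Real.exp_pos ‖v‖, hmin2]
        linarith [esplit, p1, p2, e3, e4]
    have hsum : ∑ x, μ x * Gf hp hm c x (v x)
        = μ xh * Gf hp hm c xh (v xh)
          + ∑ x ∈ Finset.univ.erase xh, μ x * Gf hp hm c x (v x) :=
      (Finset.add_sum_erase _ _ (Finset.mem_univ xh)).symm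
    have herase : ∑ x ∈ Finset.univ.erase xh, μ x * Gf hp hm c x (v x)
        ≤ ∑ x ∈ Finset.univ.erase xh, μ x * (|hp x| + |hm x| + |c|) * (1 + ‖v‖) :=
      Finset.sum_le_sum fun x _ => hterm x
    have herase2 : μ xh * (|hp xh| + |hm xh| + |c|) * (1 + ‖v‖)
        + ∑ x ∈ Finset.univ.erase xh, μ x * (|hp x| + |hm x| + |c|) * (1 + ‖v‖)
        = ∑ x : V, μ x * (|hp x| + |hm x| + |c|) * (1 + ‖v‖) :=
      Finset.add_sum_erase Finset.univ
        (fun x => μ x * (|hp x| + |hm x| + |c|) * (1 + ‖v‖)) (Finset.mem_univ xh)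
    have hCsum : ∑ x : V, μ x * (|hp x| + |hm x| + |c|) * (1 + ‖v‖) = C9 * (1 + ‖v‖) := by
      rw [hC9def, Finset.sum_mul]
    have hqq : qf ω v v ≤ Cq * ‖v‖^2 := by
      have h1 := le_trans (le_abs_self _) (qf_abs_le hnonneg v v)
      have h2 : (∑ x : V, ∑ y : V, ω x y) * ‖v‖ * ‖v‖
          = (∑ x : V, ∑ y : V, ω x y) * ‖v‖^2 := by ring
      rw [hCqdef]
      linarith
    simp only [Phi]
    linarith [hqq, hsum, herase, herase2, hCsum, hxterm]
  -- existence of the outer maximizer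
  have hcoerout : ∀ v ∈ {v : V → ℝ | ∀ x, ¬ 0 < hp x → v x = 0},
      max 1 (27*(Cq + 2*C9 + |D| + 1)/κ) ≤ ‖v‖ →
      -(Phi ω μ hp hm c (β 0)) ≤ -(Phi ω μ hp hm c (β v)) := by
    intro v hv hRv
    have hT1 : (1:ℝ) ≤ ‖v‖ := le_trans (le_max_left _ _) hRv
    have hvne : v ≠ 0 := by
      intro h
      rw [h, norm_zero] at hT1
      linarith
    have h2 : 27*(Cq + 2*C9 + |D| + 1)/κ ≤ ‖v‖ := le_trans (le_max_right _ _) hRv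
    have hmul : 27*(Cq + 2*C9 + |D| + 1) ≤ ‖v‖ * κ := (div_le_iff₀ hκpos).1 h2
    have hup := houter v hv hvne
    have hβv : Phi ω μ hp hm c (β v) ≤ Phi ω μ hp hm c v :=
      hβmin v v (fun x _ => rfl)
    have hcube := cube_le_exp (norm_nonneg v)
    have m1 : 27*(Cq + 2*C9 + |D| + 1) * ‖v‖^2 ≤ ‖v‖ * κ * ‖v‖^2 :=
      mul_le_mul_of_nonneg_right hmul (sq_nonneg _)
    have m2 : κ * ‖v‖^3 ≤ κ * (27 * Real.exp ‖v‖) :=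
      mul_le_mul_of_nonneg_left hcube hκpos.le
    have m3 : ‖v‖ ≤ ‖v‖^2 := by nlinarith
    have m4 : (1:ℝ) ≤ ‖v‖^2 := by nlinarith
    have habsD := neg_abs_le D
    have q1 : 0 ≤ |D| * (‖v‖^2 - 1) := mul_nonneg (abs_nonneg D) (by linarith)
    have q2 : 0 ≤ C9 * (‖v‖^2 - ‖v‖) := mul_nonneg hC9nn (by linarith)
    have q3 : 0 ≤ C9 * (‖v‖^2 - 1) := mul_nonneg hC9nn (by linarith)
    have hfin : Phi ω μ hp hm c (β v) ≤ D := by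
      nlinarith [hup, hβv, m1, m2, q1, q2, q3, m4, habsD]
    linarith [hD]
  have hXclosed : IsClosed {v : V → ℝ | ∀ x, ¬ 0 < hp x → v x = 0} := by
    have h : {v : V → ℝ | ∀ x, ¬ 0 < hp x → v x = 0}
        = {u : V → ℝ | ∀ x, ¬ 0 < hp x → u x = (0 : V → ℝ) x} := by
      ext u; simp
    rw [h]
    exact closed_pred _ _
  obtain ⟨as, hasX, hasmin⟩ := exists_minOn hhcont hXclosed (fun x _ => rfl) hcoerout
  have hmax : ∀ v : V → ℝ, (∀ x, ¬ 0 < hp x → v x = 0) →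
      Phi ω μ hp hm c (β v) ≤ Phi ω μ hp hm c (β as) := by
    intro v hv
    have := hasmin v hv
    linarith
  -- conclusion: all partial derivatives vanish at β as
  refine ⟨β as, fun z => ?_⟩
  by_cases hz : 0 < hp z
  swap
  · exact hgradB as z hz
  · have hS1norm : ‖(Pi.single z 1 : V → ℝ)‖ ≤ 1 := by
      refine (pi_norm_le_iff_of_nonneg zero_le_one).2 fun x => ?_
      rw [Real.norm_eq_abs, Pi.single_apply]
      by_cases hxz : x = z <;> simp [hxz]
    set Cb : ℝ := ∑ x : V, μ x * (|hp x| + |hm x|) with hCbdef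
    have hCbnn : 0 ≤ Cb := Finset.sum_nonneg fun x _ =>
      mul_nonneg (hμ x).le (by positivity)
    set Kst : ℝ := ‖β as‖ + L with hKstdef
    set CC : ℝ := (Cq + Cb * Real.exp Kst) * (L+1)^2 with hCCdef
    have hL1pos : (0:ℝ) < L + 1 := by linarith
    have hmain : ∀ t : ℝ, |t| ≤ 1/(L+1) →
        Phi ω μ hp hm c (β as + t • (Pi.single z 1 : V → ℝ))
          ≤ Phi ω μ hp hm c (β as) + CC * t^2 := by
      intro t ht
      have htle1 : |t| * (L+1) ≤ 1 := by
        have := (le_div_iff₀ hL1pos).1 ht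
        linarith
      have htle1' : |t| ≤ 1 := by nlinarith [abs_nonneg t]
      set at' : V → ℝ := as + t • (Pi.single z 1 : V → ℝ) with hatdef
      have hatX : ∀ x, ¬ 0 < hp x → at' x = 0 := by
        intro x hx
        have hxz : x ≠ z := fun h => hx (h ▸ hz)
        rw [hatdef]
        simp [Pi.single_eq_of_ne hxz, hasX x hx]
      set ut : V → ℝ := β at' with hutdef
      set wt : V → ℝ := β as + t • (Pi.single z 1 : V → ℝ) - ut with hwtdef
      have hwtA : ∀ x, 0 < hp x → wt x = 0 := by
        intro x hx
        have h1 : β as x = as x := hβA as x hx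
        have h2 : ut x = at' x := hβA at' x hx
        have h3 : wt x = β as x + (t • (Pi.single z 1 : V → ℝ)) x - ut x := by
          rw [hwtdef]; simp
        rw [h3, h1, h2, hatdef]
        simp
      have hdiff : ‖as - at'‖ ≤ |t| := by
        have h1 : as - at' = -(t • (Pi.single z 1 : V → ℝ)) := by rw [hatdef]; abel
        rw [h1, norm_neg, norm_smul, Real.norm_eq_abs]
        exact mul_le_of_le_one_right (abs_nonneg t) hS1norm
      have hlip1 : ‖β as - ut‖ ≤ L * |t| := by
        rw [hutdef]
        exact le_trans (hlip at' as) (mul_le_mul_of_nonneg_left hdiff hLpos.le)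
      have hwnorm : ‖wt‖ ≤ (L+1) * |t| := by
        have h1 : wt = (β as - ut) + t • (Pi.single z 1 : V → ℝ) := by rw [hwtdef]; abel
        rw [h1]
        have h2 : ‖t • (Pi.single z 1 : V → ℝ)‖ ≤ |t| := by
          rw [norm_smul, Real.norm_eq_abs]
          exact mul_le_of_le_one_right (abs_nonneg t) hS1norm
        calc ‖(β as - ut) + t • (Pi.single z 1 : V → ℝ)‖
            ≤ ‖β as - ut‖ + ‖t • (Pi.single z 1 : V → ℝ)‖ := norm_add_le _ _
          _ ≤ L * |t| + |t| := by linarith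
          _ = (L+1) * |t| := by ring
      have hwle1 : ‖wt‖ ≤ 1 := by
        calc ‖wt‖ ≤ (L+1)*|t| := hwnorm
          _ = |t| * (L+1) := by ring
          _ ≤ 1 := htle1
      have hutnorm : ‖ut‖ ≤ Kst := by
        have h1 : ut = β as - (β as - ut) := by abel
        have h2 : ‖ut‖ ≤ ‖β as‖ + ‖β as - ut‖ := by
          conv_lhs => rw [h1]
          exact norm_sub_le _ _
        have h3 : L * |t| ≤ L * 1 := mul_le_mul_of_nonneg_left htle1' hLpos.le
        rw [hKstdef]
        linarith [hlip1]
      have hexp := Phi_expand hsymm μ hp hm c ut wt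
      have e1 : ut + wt = β as + t • (Pi.single z 1 : V → ℝ) := by rw [hwtdef]; abel
      rw [e1] at hexp
      have h0 : ∑ z', wt z' * gradPhi ω μ hp hm c ut z' = 0 := by
        refine Finset.sum_eq_zero fun z' _ => ?_
        by_cases hz' : 0 < hp z'
        · rw [hwtA z' hz', zero_mul]
        · rw [hutdef, hgradB at' z' hz', mul_zero]
      have hqb : qf ω wt wt ≤ Cq * ‖wt‖^2 := by
        have h1 := le_trans (le_abs_self _) (qf_abs_le hnonneg wt wt)
        have h2 : (∑ x : V, ∑ y : V, ω x y) * ‖wt‖ * ‖wt‖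
            = (∑ x : V, ∑ y : V, ω x y) * ‖wt‖^2 := by ring
        rw [hCqdef]
        linarith
      have hbb : ∑ x, μ x * breg hp hm c x (ut x) (wt x)
          ≤ Cb * Real.exp Kst * ‖wt‖^2 := by
        have hterm2 : ∀ x : V, μ x * breg hp hm c x (ut x) (wt x)
            ≤ μ x * (|hp x| + |hm x|) * Real.exp Kst * ‖wt‖^2 := by
          intro x
          have hwx : |wt x| ≤ 1 :=
            le_trans (by simpa [Real.norm_eq_abs] using norm_le_pi_norm wt x) hwle1
          have hb1 := breg_le hp hm c x (ut x) hwx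
          have hux : |ut x| ≤ Kst :=
            le_trans (by simpa [Real.norm_eq_abs] using norm_le_pi_norm ut x) hutnorm
          have he1 : Real.exp (ut x) ≤ Real.exp Kst :=
            Real.exp_le_exp.2 (le_trans (le_abs_self _) hux)
          have he2 : Real.exp (-(ut x)) ≤ Real.exp Kst :=
            Real.exp_le_exp.2 (le_trans (neg_le_abs _) hux)
          have hw2 : (wt x)^2 ≤ ‖wt‖^2 := by
            have h := norm_le_pi_norm wt x
            rw [Real.norm_eq_abs] at h
            nlinarith [abs_nonneg (wt x), sq_abs (wt x)]
          have hstep : (|hp x| * Real.exp (ut x) + |hm x| * Real.exp (-(ut x))) * (wt x)^2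
              ≤ (|hp x| + |hm x|) * Real.exp Kst * ‖wt‖^2 := by
            have s1 : |hp x| * Real.exp (ut x) + |hm x| * Real.exp (-(ut x))
                ≤ (|hp x| + |hm x|) * Real.exp Kst := by
              nlinarith [abs_nonneg (hp x), abs_nonneg (hm x), he1, he2]
            calc (|hp x| * Real.exp (ut x) + |hm x| * Real.exp (-(ut x))) * (wt x)^2
                ≤ ((|hp x| + |hm x|) * Real.exp Kst) * (wt x)^2 :=
                  mul_le_mul_of_nonneg_right s1 (sq_nonneg _)
              _ ≤ ((|hp x| + |hm x|) * Real.exp Kst) * ‖wt‖^2 := by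
                  apply mul_le_mul_of_nonneg_left hw2 (by positivity)
              _ = (|hp x| + |hm x|) * Real.exp Kst * ‖wt‖^2 := by ring
          calc μ x * breg hp hm c x (ut x) (wt x)
              ≤ μ x * ((|hp x| * Real.exp (ut x) + |hm x| * Real.exp (-(ut x))) * (wt x)^2) :=
                mul_le_mul_of_nonneg_left hb1 (hμ x).le
            _ ≤ μ x * ((|hp x| + |hm x|) * Real.exp Kst * ‖wt‖^2) :=
                mul_le_mul_of_nonneg_left hstep (hμ x).le
            _ = μ x * (|hp x| + |hm x|) * Real.exp Kst * ‖wt‖^2 := by ring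
        calc ∑ x, μ x * breg hp hm c x (ut x) (wt x)
            ≤ ∑ x, μ x * (|hp x| + |hm x|) * Real.exp Kst * ‖wt‖^2 :=
              Finset.sum_le_sum fun x _ => hterm2 x
          _ = Cb * Real.exp Kst * ‖wt‖^2 := by
              rw [hCbdef, Finset.sum_mul, Finset.sum_mul]
      have hPhile : Phi ω μ hp hm c ut ≤ Phi ω μ hp hm c (β as) := hmax at' hatX
      have hw2 : ‖wt‖^2 ≤ (L+1)^2 * t^2 := by
        nlinarith [hwnorm, norm_nonneg wt, abs_nonneg t, sq_abs t]
      have hcc : (Cq + Cb * Real.exp Kst) * ‖wt‖^2 ≤ CC * t^2 := by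
        rw [hCCdef]
        calc (Cq + Cb * Real.exp Kst) * ‖wt‖^2
            ≤ (Cq + Cb * Real.exp Kst) * ((L+1)^2 * t^2) := by
              apply mul_le_mul_of_nonneg_left hw2
                (add_nonneg hCqnn (mul_nonneg hCbnn (Real.exp_pos _).le))
          _ = (Cq + Cb * Real.exp Kst) * (L+1)^2 * t^2 := by ring
      have hring : (Cq + Cb * Real.exp Kst) * ‖wt‖^2
          = Cq * ‖wt‖^2 + Cb * Real.exp Kst * ‖wt‖^2 := by ring
      have hfinal : qf ω wt wt + ∑ x, μ x * breg hp hm c x (ut x) (wt x) ≤ CC * t^2 := by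
        linarith [hqb, hbb, hring, hcc]
      linarith [hexp, h0, hfinal, hPhile]
    have ht₀pos : (0:ℝ) < 1/(L+1) := by positivity
    have hloc : IsLocalMax
        (fun t : ℝ => Phi ω μ hp hm c (β as + t • (Pi.single z 1 : V → ℝ)) - CC * t^2) 0 := by
      have hball : Metric.ball (0:ℝ) (1/(L+1)) ∈ nhds (0:ℝ) :=
        Metric.ball_mem_nhds _ ht₀pos
      refine Filter.eventually_of_mem hball fun t ht => ?_
      rw [Metric.mem_ball, Real.dist_eq, sub_zero] at ht
      have h1 := hmain t ht.le
      show Phi ω μ hp hm c (β as + t • (Pi.single z 1 : V → ℝ)) - CC * t^2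
          ≤ Phi ω μ hp hm c (β as + (0:ℝ) • (Pi.single z 1 : V → ℝ)) - CC * (0:ℝ)^2
      have h2 : Phi ω μ hp hm c (β as + (0:ℝ) • (Pi.single z 1 : V → ℝ)) - CC * (0:ℝ)^2
          = Phi ω μ hp hm c (β as) := by
        norm_num
      rw [h2]
      linarith
    have hd2 : HasDerivAt (fun t : ℝ => CC * t^2) 0 0 := by
      simpa using (hasDerivAt_pow 2 (0:ℝ)).const_mul CC
    have hder := (hasDerivAt_line hsymm μ hp hm c (β as) z).sub hd2
    have hzero := hloc.hasDerivAt_eq_zero hder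
    simpa using hzero

/-- A zero of the gradient solves the sinh-Gordon equation. -/
lemma grad_zero_solution {ω : V → V → ℝ} {μ hp hm : V → ℝ} {c : ℝ} (hμ : ∀ x, 0 < μ x)
    {u : V → ℝ} (hu : ∀ z, gradPhi ω μ hp hm c u z = 0) :
    ∀ z, -graphLap ω μ u z = hp z * Real.exp (u z) + hm z * Real.exp (-u z) - c := by
  intro z
  have h := hu z
  simp only [gradPhi, Gd] at h
  have hμz : μ z ≠ 0 := (hμ z).ne'
  have hs : ∑ y, ω z y * (u y - u z)
      = μ z * (c - hp z * Real.exp (u z) - hm z * Real.exp (-(u z))) := by linarith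
  rw [graphLap, hs]
  field_simp
  ring

end SG

/-- Existence for the sinh-Gordon equation when the positivity sets coincide. -/
theorem stmt_2 {V : Type*} [Fintype V] [Nonempty V]
    (ω : V → V → ℝ) (μ : V → ℝ)
    (hsymm : ∀ x y, ω x y = ω y x)
    (hnonneg : ∀ x y, 0 ≤ ω x y)
    (hconn : graphConnected ω)
    (hμ : ∀ x, 0 < μ x)
    (hp hm : V → ℝ) (c : ℝ)
    (hp0 : hp ≠ 0) (hm0 : hm ≠ 0)
    (hset : {x : V | 0 < hp x} = {x : V | hm x < 0}) :
    ∃ u : V → ℝ,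
      ∀ x, -graphLap ω μ u x = hp x * Real.exp (u x) + hm x * Real.exp (-u x) - c := by
  classical
  have hiff : ∀ x, 0 < hp x ↔ hm x < 0 := fun x => Set.ext_iff.1 hset x
  have hmA : ∀ x, 0 < hp x → hm x < 0 := fun x hx => (hiff x).1 hx
  have hmB : ∀ x, ¬ 0 < hp x → 0 ≤ hm x :=
    fun x hx => not_lt.1 (fun hcon => hx ((hiff x).2 hcon))
  by_cases hA : ∃ a, 0 < hp a
  · obtain ⟨a₀, ha₀⟩ := hA
    obtain ⟨u, hu⟩ := SG.case_nonempty hsymm hnonneg hconn hμ hmB hmA ha₀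
    exact ⟨u, SG.grad_zero_solution hμ hu⟩
  · push_neg at hA
    have hA' : ∀ x, ¬ 0 < hp x := fun x => not_lt.2 (hA x)
    have hmge : ∀ x, 0 ≤ hm x := fun x => hmB x (hA' x)
    have hx₀ : ∃ x, hp x < 0 := by
      by_contra hcon
      push_neg at hcon
      apply hp0
      funext x
      exact le_antisymm (hA x) (hcon x)
    obtain ⟨x₀, hx₀⟩ := hx₀
    have hx₁ : ∃ x, 0 < hm x := by
      by_contra hcon
      push_neg at hcon
      apply hm0
      funext x
      exact le_antisymm (hcon x) (hmge x)
    obtain ⟨x₁, hx₁⟩ := hx₁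
    obtain ⟨u, hu⟩ := SG.case_empty hsymm hnonneg hconn hμ hA' hmge hx₀ hx₁
    exact ⟨u, SG.grad_zero_solution hμ hu⟩
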